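/- Let a and b be positive integers. Then the infinite regular continued fraction [0; a, a+b, a+2b, a+3b, ...] converges and equals (1/b) · (\sum_{k=0}^∞ b^{-2k} / ((a/b)_{k+1} k!)) / (\sum_{k=0}^∞ b^{-2k} / ((a/b)_k k!)), where (x)_0 = 1 and (x)_k = x(x+1)···(x+k-1). -/

import Mathlib

open Filter Topology

/-- Canonical numerators of the continued fraction `b₀ + K(aₙ/bₙ)`,
shifted so that `CFnum pa pb (n+1)` is the classical `Aₙ` (and `CFnum pa pb 0 = A₋₁ = 1`). -/
def CFnum (pa pb : ℕ → ℝ) : ℕ → ℝ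
  | 0 => 1
  | 1 => pb 0
  | n + 2 => pb (n+1) * CFnum pa pb (n+1) + pa (n+1) * CFnum pa pb n

/-- Canonical denominators, shifted as in `CFnum`. -/
def CFden (pa pb : ℕ → ℝ) : ℕ → ℝ
  | 0 => 0
  | 1 => 1
  | n + 2 => pb (n+1) * CFden pa pb (n+1) + pa (n+1) * CFden pa pb n

/-- The continued fraction `b₀ + K(aₙ/bₙ)` converges to `x`. -/
def CFConvTo (pa pb : ℕ → ℝ) (x : ℝ) : Prop :=
  Tendsto (fun n => CFnum pa pb (n+1) / CFden pa pb (n+1)) atTop (𝓝 x)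


/-- The rising factorial (Pochhammer symbol) `(x)ₖ = x(x+1)⋯(x+k-1)`. -/
noncomputable def risingFac (x : ℝ) (k : ℕ) : ℝ := ∏ j ∈ Finset.range k, (x + j)

lemma risingFac_zero (x : ℝ) : risingFac x 0 = 1 := by simp [risingFac]

lemma risingFac_succ (x : ℝ) (k : ℕ) : risingFac x (k+1) = risingFac x k * (x + k) := by
  simp [risingFac, Finset.prod_range_succ]

lemma risingFac_succ' (x : ℝ) (k : ℕ) : risingFac x (k+1) = x * risingFac (x+1) k := by
  rw [risingFac, Finset.prod_range_succ', risingFac]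
  simp only [Nat.cast_zero, add_zero, Nat.cast_add, Nat.cast_one]
  rw [mul_comm]
  congr 1
  apply Finset.prod_congr rfl
  intro j _; ring

lemma risingFac_pos {x : ℝ} (hx : 0 < x) (k : ℕ) : 0 < risingFac x k := by
  apply Finset.prod_pos
  intro j _; positivity

lemma risingFac_ge {x : ℝ} (hx : 0 < x) (k : ℕ) : min x 1 ≤ risingFac x k := by
  induction k with
  | zero => simp [risingFac_zero]
  | succ n ih =>
    rcases Nat.eq_zero_or_pos n with rfl | hn
    · rw [risingFac_succ, risingFac_zero]; simp [min_le_left x 1]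
    · rw [risingFac_succ]
      calc min x 1 ≤ risingFac x n * 1 := by simpa using ih
        _ ≤ risingFac x n * (x + n) := by
            apply mul_le_mul_of_nonneg_left _ (risingFac_pos hx n).le
            have : (1:ℝ) ≤ (n:ℝ) := by exact_mod_cast hn
            linarith

noncomputable def Tterm (z c : ℝ) (k : ℕ) : ℝ := z^k / (risingFac c k * Nat.factorial k)

lemma summable_T {z c : ℝ} (hz : 0 < z) (hc : 0 < c) : Summable (Tterm z c) := by
  have hm : 0 < min c 1 := lt_min hc one_pos
  refine Summable.of_nonneg_of_le (f := fun k => (min c 1)⁻¹ * (z^k / Nat.factorial k))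
    (fun k => le_of_lt (div_pos (pow_pos hz k)
      (mul_pos (risingFac_pos hc k) (by positivity)))) (fun k => ?_)
    ((Real.summable_pow_div_factorial z).mul_left _)
  have hfac : (0:ℝ) < Nat.factorial k := by positivity
  have key : z^k / (risingFac c k * Nat.factorial k) ≤ z^k / (min c 1 * Nat.factorial k) :=
    div_le_div_of_nonneg_left (pow_nonneg hz.le k) (mul_pos hm hfac)
      (mul_le_mul_of_nonneg_right (risingFac_ge hc k) hfac.le)
  calc Tterm z c k ≤ z^k / (min c 1 * Nat.factorial k) := key
    _ = (min c 1)⁻¹ * (z^k / Nat.factorial k) := by field_simp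

lemma Tterm_zero (z c : ℝ) : Tterm z c 0 = 1 := by simp [Tterm, risingFac]

noncomputable def ysum (z c : ℝ) : ℝ := ∑' k, Tterm z c k

lemma ysum_pos {z c : ℝ} (hz : 0 < z) (hc : 0 < c) : 0 < ysum z c := by
  refine Summable.tsum_pos (summable_T hz hc) (fun k => le_of_lt ?_) 0 (by simp [Tterm_zero])
  exact div_pos (pow_pos hz k) (mul_pos (risingFac_pos hc k) (by positivity))

lemma Tterm_step {z c : ℝ} (hz : 0 < z) (hc : 0 < c) (k : ℕ) :
    Tterm z c (k+1) - Tterm z (c+1) (k+1) = (z/(c*(c+1))) * Tterm z (c+2) k := by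
  have hP : 0 < risingFac (c+1) k := risingFac_pos (by linarith) k
  have hQ : 0 < risingFac (c+2) k := risingFac_pos (by linarith) k
  have hPQ : (c+1) * risingFac (c+2) k = risingFac (c+1) k * (c+1+(k:ℝ)) := by
    rw [show c+(2:ℝ) = (c+1)+1 by ring, ← risingFac_succ', risingFac_succ]
  have hfac : (0:ℝ) < Nat.factorial k := by positivity
  have hfs : ((Nat.factorial (k+1) : ℝ)) = ((k:ℝ)+1) * Nat.factorial k := by
    push_cast [Nat.factorial_succ]; ring
  unfold Tterm
  rw [risingFac_succ' c k, risingFac_succ' (c+1) k, show c+1+(1:ℝ) = c+2 by ring, hfs]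
  set P := risingFac (c+1) k with hPdef
  set Q := risingFac (c+2) k with hQdef
  set F := ((Nat.factorial k : ℝ)) with hFdef
  field_simp
  ring_nf
  linear_combination (z^(k+1)) * hPQ

lemma ysum_rec {z c : ℝ} (hz : 0 < z) (hc : 0 < c) :
    ysum z c = ysum z (c+1) + (z/(c*(c+1))) * ysum z (c+2) := by
  have h0 := summable_T hz hc
  have h1 := summable_T hz (by linarith : (0:ℝ) < c+1)
  have h2 := summable_T hz (by linarith : (0:ℝ) < c+2)
  have hD : Summable (fun k => Tterm z c k - Tterm z (c+1) k) := h0.sub h1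
  have e1 : ysum z c - ysum z (c+1) = ∑' k, (Tterm z c k - Tterm z (c+1) k) :=
    (Summable.tsum_sub h0 h1).symm
  rw [Summable.tsum_eq_zero_add hD] at e1
  simp only [Tterm_zero, sub_self, zero_add] at e1
  have e2 : ∑' k, (Tterm z c (k+1) - Tterm z (c+1) (k+1))
      = ∑' k, (z/(c*(c+1))) * Tterm z (c+2) k := tsum_congr (fun k => Tterm_step hz hc k)
  rw [e2, tsum_mul_left] at e1
  have : (∑' k, Tterm z (c+2) k) = ysum z (c+2) := rfl
  rw [this] at e1
  linarith

theorem stmt16 (a b : ℕ) (ha : 0 < a) (hb : 0 < b) :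
    CFConvTo (fun _ => 1)
      (fun n => if n = 0 then 0 else (a : ℝ) + ((n : ℝ) - 1) * b)
      ((1/(b : ℝ)) *
        ((∑' k : ℕ, ((b : ℝ)^(2*k))⁻¹ / (risingFac ((a : ℝ)/b) (k+1) * Nat.factorial k)) /
          (∑' k : ℕ, ((b : ℝ)^(2*k))⁻¹ / (risingFac ((a : ℝ)/b) k * Nat.factorial k)))) := by
  have hbR : (0:ℝ) < b := by exact_mod_cast hb
  have haR : (0:ℝ) < a := by exact_mod_cast ha
  have haR1 : (1:ℝ) ≤ a := by exact_mod_cast ha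
  have hbR1 : (1:ℝ) ≤ b := by exact_mod_cast hb
  set c : ℝ := (a:ℝ)/b with hcdef
  clear_value c
  have hc : 0 < c := hcdef ▸ div_pos haR hbR
  set z : ℝ := (((b:ℝ))^2)⁻¹ with hzdef
  have hz : 0 < z := by rw [hzdef]; positivity
  clear_value z
  have hzb : z * (b:ℝ)^2 = 1 := by
    rw [hzdef]; exact inv_mul_cancel₀ (by positivity)
  set pa : ℕ → ℝ := (fun _ => 1) with hpadef
  set pb : ℕ → ℝ := (fun n => if n = 0 then 0 else (a : ℝ) + ((n : ℝ) - 1) * b) with hpbdef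
  have hpb : ∀ n : ℕ, pb (n+1) = (a:ℝ) + n * b := by
    intro n
    simp only [hpbdef, if_neg (Nat.succ_ne_zero n)]
    push_cast; ring
  set Y : ℕ → ℝ := fun n => ysum z (c + n) with hYdef
  clear_value Y
  have hcn : ∀ n : ℕ, 0 < c + n := fun n => by
    have : (0:ℝ) ≤ (n:ℝ) := n.cast_nonneg; linarith
  have hY : ∀ n, 0 < Y n := fun n => by rw [hYdef]; exact ysum_pos hz (hcn n)
  have hYrec : ∀ n : ℕ, Y n = Y (n+1) + (z/((c+n)*(c+n+1))) * Y (n+2) := by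
    intro n
    have h := ysum_rec hz (hcn n)
    have e1 : c + ((n:ℝ)+1) = (c + n) + 1 := by ring
    have e2 : c + ((n:ℝ)+2) = (c + n) + 2 := by ring
    simp only [hYdef]
    push_cast
    rw [e1, e2]
    exact h
  set u : ℕ → ℝ := fun n => Y (n+1) / ((b:ℝ) * (c+n) * Y n) with hudef
  clear_value u
  have hu_pos : ∀ n, 0 < u n := by
    intro n
    rw [hudef]
    exact div_pos (hY (n+1)) (mul_pos (mul_pos hbR (hcn n)) (hY n))
  have hu : ∀ n, u n * (((a:ℝ) + n*b) + u (n+1)) = 1 := by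
    intro n
    have hab : (a:ℝ) + n*b = (b:ℝ)*(c+n) := by rw [hcdef]; field_simp
    have h := hYrec n
    have hY0 := hY n; have hY1 := hY (n+1); have hY2 := hY (n+2)
    have hc0 := hcn n
    have hc1 : (0:ℝ) < c + n + 1 := by linarith
    have hcast : ((n+1:ℕ):ℝ) = (n:ℝ)+1 := by push_cast; ring
    have hCC0 : ((c+(n:ℝ))*(c+(n:ℝ)+1)) ≠ 0 := (mul_pos hc0 hc1).ne'
    have h' : (c+(n:ℝ))*(c+(n:ℝ)+1) * Y n = (c+(n:ℝ))*(c+(n:ℝ)+1) * Y (n+1) + z * Y (n+2) := by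
      rw [h]; field_simp
    rw [hudef]
    show Y (n+1) / ((b:ℝ) * (c+n) * Y n) * ((a:ℝ) + n*b + Y (n+2) / ((b:ℝ) * (c+(↑(n+1):ℝ)) * Y (n+1))) = 1
    rw [hcast, hab]
    field_simp
    linear_combination (-((b:ℝ)^2)) * h' - (Y (n+2)) * hzb
  have hu_lt : ∀ n, u n < 1 := by
    intro n
    have h := hu n
    have h1 := hu_pos n
    have h2 := hu_pos (n+1)
    have hn0 : (0:ℝ) ≤ (n:ℕ) := Nat.cast_nonneg n
    nlinarith [mul_nonneg (Nat.cast_nonneg n : (0:ℝ) ≤ n) hbR.le]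
  have hBfacts : ∀ n : ℕ, 0 ≤ CFden pa pb n ∧ 1 ≤ CFden pa pb (n+1) ∧ (n:ℝ) ≤ CFden pa pb (n+1) := by
    intro n
    induction n with
    | zero => simp [CFden]
    | succ m ih =>
      obtain ⟨h0, h1, h2⟩ := ih
      have hden : CFden pa pb (m+2) = pb (m+1) * CFden pa pb (m+1) + CFden pa pb m := by
        simp [CFden, hpadef]
      have hm0 : (0:ℝ) ≤ (m:ℝ) := Nat.cast_nonneg m
      refine ⟨by linarith, ?_, ?_⟩
      · rw [hden, hpb m]
        nlinarith [mul_nonneg hm0 hbR.le,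
          mul_nonneg (by nlinarith [mul_nonneg hm0 hbR.le] : (0:ℝ) ≤ (a:ℝ) + (m:ℝ)*(b:ℝ) - 1)
            (by linarith : (0:ℝ) ≤ CFden pa pb (m+1) - 1)]
      · rw [hden, hpb m]
        push_cast
        have hmb : (m:ℝ) * 1 ≤ (m:ℝ) * (b:ℝ) := mul_le_mul_of_nonneg_left hbR1 hm0
        nlinarith [mul_nonneg (by linarith : (0:ℝ) ≤ (a:ℝ) + (m:ℝ)*(b:ℝ) - 1 - (m:ℝ))
            (by linarith : (0:ℝ) ≤ CFden pa pb (m+1) - 1),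
          mul_nonneg (by linarith : (0:ℝ) ≤ 1 + (m:ℝ))
            (by linarith : (0:ℝ) ≤ CFden pa pb (m+1) - 1)]
  have hkey : ∀ n : ℕ, u 0 * (CFden pa pb (n+1) + CFden pa pb n * u n)
      = CFnum pa pb (n+1) + CFnum pa pb n * u n := by
    intro n
    induction n with
    | zero =>
      have h0 : pb 0 = 0 := by simp [hpbdef]
      simp [CFden, CFnum, h0]
    | succ m ih =>
      have hnum : CFnum pa pb (m+2) = pb (m+1) * CFnum pa pb (m+1) + CFnum pa pb m := by
        simp [CFnum, hpadef]
      have hden : CFden pa pb (m+2) = pb (m+1) * CFden pa pb (m+1) + CFden pa pb m := by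
        simp [CFden, hpadef]
      have hum := hu m
      rw [hnum, hden, hpb m]
      linear_combination (((a:ℝ) + m*b) + u (m+1)) * ih
        + (CFnum pa pb m - u 0 * CFden pa pb m) * hum
  have hE : ∀ n : ℕ, |u 0 * CFden pa pb (n+1) - CFnum pa pb (n+1)| ≤ 1 := by
    intro n
    induction n with
    | zero =>
      have h0 : pb 0 = 0 := by simp [hpbdef]
      have e : CFden pa pb 1 = 1 := rfl
      have e2 : CFnum pa pb 1 = pb 0 := rfl
      rw [e, e2, h0, mul_one, sub_zero, abs_of_pos (hu_pos 0)]
      exact (hu_lt 0).le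
    | succ m ih =>
      have e : u 0 * CFden pa pb (m+2) - CFnum pa pb (m+2)
          = u (m+1) * (CFnum pa pb (m+1) - u 0 * CFden pa pb (m+1)) := by
        linear_combination hkey (m+1)
      rw [e, abs_mul, abs_sub_comm]
      calc |u (m+1)| * |u 0 * CFden pa pb (m+1) - CFnum pa pb (m+1)| ≤ 1 * 1 := by
            apply mul_le_mul _ ih (abs_nonneg _) zero_le_one
            rw [abs_of_pos (hu_pos _)]; exact (hu_lt _).le
        _ = 1 := mul_one 1
  have hconv : Tendsto (fun n => CFnum pa pb (n+1) / CFden pa pb (n+1)) atTop (𝓝 (u 0)) := by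
    rw [← tendsto_sub_nhds_zero_iff]
    refine squeeze_zero_norm' (a := fun n : ℕ => 1/(n:ℝ)) ?_ ?_
    · filter_upwards [eventually_ge_atTop 1] with n hn
      have hn1 : (1:ℝ) ≤ (n:ℝ) := by exact_mod_cast hn
      obtain ⟨-, hB1, hBn⟩ := hBfacts n
      have hBpos : (0:ℝ) < CFden pa pb (n+1) := by linarith
      have e : CFnum pa pb (n+1) / CFden pa pb (n+1) - u 0
          = -((u 0 * CFden pa pb (n+1) - CFnum pa pb (n+1)) / CFden pa pb (n+1)) := by
        field_simp
        ring
      rw [Real.norm_eq_abs, e, abs_neg, abs_div, abs_of_pos hBpos]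
      exact div_le_div₀ zero_le_one (hE n) (by linarith) hBn
    · exact tendsto_one_div_atTop_nhds_zero_nat
  have hzk : ∀ k:ℕ, ((b:ℝ)^(2*k))⁻¹ = z^k := by
    intro k; rw [hzdef, pow_mul, ← inv_pow]
  have hden_eq : (∑' k:ℕ, ((b:ℝ)^(2*k))⁻¹ / (risingFac c k * Nat.factorial k)) = Y 0 := by
    rw [hYdef]
    simp only [Nat.cast_zero, add_zero]
    refine tsum_congr fun k => ?_
    rw [hzk k]; rfl
  have hnum_eq : (∑' k:ℕ, ((b:ℝ)^(2*k))⁻¹ / (risingFac c (k+1) * Nat.factorial k))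
      = c⁻¹ * Y 1 := by
    rw [hYdef]
    simp only [Nat.cast_one]
    rw [show ysum z (c+1) = ∑' k, Tterm z (c+1) k from rfl, ← tsum_mul_left]
    refine tsum_congr fun k => ?_
    rw [hzk k, risingFac_succ', Tterm]
    have hR : (0:ℝ) < risingFac (c+1) k := risingFac_pos (by linarith) k
    have hF : (0:ℝ) < (Nat.factorial k : ℝ) := by positivity
    field_simp
  have hval : (1/(b:ℝ)) *
      ((∑' k:ℕ, ((b:ℝ)^(2*k))⁻¹ / (risingFac c (k+1) * Nat.factorial k)) /
        (∑' k:ℕ, ((b:ℝ)^(2*k))⁻¹ / (risingFac c k * Nat.factorial k))) = u 0 := by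
    rw [hden_eq, hnum_eq, hudef]
    simp only [Nat.cast_zero, add_zero, zero_add]
    have hY0 := hY 0
    have hY1 := hY 1
    ring
  rw [show (CFConvTo pa pb ((1/(b:ℝ)) *
      ((∑' k:ℕ, ((b:ℝ)^(2*k))⁻¹ / (risingFac c (k+1) * Nat.factorial k)) /
        (∑' k:ℕ, ((b:ℝ)^(2*k))⁻¹ / (risingFac c k * Nat.factorial k))))) =
    (CFConvTo pa pb (u 0)) from by rw [hval]]
  exact hconv
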